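/- The Werner operator ρ(η) = (1−η) I/d² + η V/d is local-positive if and only if −1/(d−1) ≤ η ≤ 1. -/

import Mathlib

open Matrix Kronecker BigOperators
open scoped ComplexOrder

/-- The swap operator `V = ∑ i j, |ij⟩⟨ji|` on `C^d ⊗ C^d`. -/
noncomputable def swapOp (d : ℕ) : Matrix (Fin d × Fin d) (Fin d × Fin d) ℂ :=
  fun p q => if p.1 = q.2 ∧ p.2 = q.1 then 1 else 0

/-- The Werner operator `ρ(η) = (1−η) I/d² + η V/d`. -/
noncomputable def werner (d : ℕ) (η : ℝ) : Matrix (Fin d × Fin d) (Fin d × Fin d) ℂ :=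
  ((1 - η) / (d : ℝ)^2) • (1 : Matrix (Fin d × Fin d) (Fin d × Fin d) ℂ)
    + (η / (d : ℝ)) • swapOp d

lemma form_eq (d : ℕ) (η : ℝ) (ψ φ : Fin d → ℂ) :
    star (fun p : Fin d × Fin d => ψ p.1 * φ p.2) ⬝ᵥ
      werner d η *ᵥ (fun p : Fin d × Fin d => ψ p.1 * φ p.2)
    = ((((1 - η) / (d:ℝ)^2) * ((∑ i, Complex.normSq (ψ i)) * (∑ j, Complex.normSq (φ j)))
       + (η / (d:ℝ)) * Complex.normSq (∑ i, (starRingEnd ℂ) (ψ i) * φ i) : ℝ) : ℂ) := by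
  have hswap : swapOp d *ᵥ (fun p : Fin d × Fin d => ψ p.1 * φ p.2)
      = fun p : Fin d × Fin d => ψ p.2 * φ p.1 := by
    funext p
    simp only [mulVec, dotProduct, swapOp]
    rw [Fintype.sum_prod_type]
    simp [ite_and, Finset.sum_ite_eq]
  rw [werner, Matrix.add_mulVec, Matrix.smul_mulVec, Matrix.smul_mulVec,
    Matrix.one_mulVec, hswap, dotProduct_add, dotProduct_smul, dotProduct_smul]
  have h1 : star (fun p : Fin d × Fin d => ψ p.1 * φ p.2) ⬝ᵥ (fun p : Fin d × Fin d => ψ p.1 * φ p.2)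
      = (((∑ i, Complex.normSq (ψ i)) * (∑ j, Complex.normSq (φ j)) : ℝ) : ℂ) := by
    simp only [dotProduct, Pi.star_apply, star_mul']
    rw [Fintype.sum_prod_type]
    push_cast
    rw [Finset.sum_mul_sum]
    refine Finset.sum_congr rfl fun i _ => Finset.sum_congr rfl fun j _ => ?_
    simp [Complex.normSq_eq_conj_mul_self]; ring
  have h2 : star (fun p : Fin d × Fin d => ψ p.1 * φ p.2) ⬝ᵥ (fun p : Fin d × Fin d => ψ p.2 * φ p.1)
      = ((Complex.normSq (∑ i, (starRingEnd ℂ) (ψ i) * φ i) : ℝ) : ℂ) := by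
    simp only [dotProduct, Pi.star_apply, star_mul']
    rw [Fintype.sum_prod_type]
    push_cast
    rw [Complex.normSq_eq_conj_mul_self, map_sum, Finset.sum_mul_sum, Finset.sum_comm]
    refine Finset.sum_congr rfl fun i _ => Finset.sum_congr rfl fun j _ => ?_
    simp; ring
  rw [h1, h2]
  push_cast
  simp [Complex.real_smul]

-- Cauchy-Schwarz for normSq
lemma cs (d : ℕ) (ψ φ : Fin d → ℂ) :
    Complex.normSq (∑ i, (starRingEnd ℂ) (ψ i) * φ i)
      ≤ (∑ i, Complex.normSq (ψ i)) * (∑ j, Complex.normSq (φ j)) := by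
  let ψ' : EuclideanSpace ℂ (Fin d) := WithLp.toLp 2 ψ
  let φ' : EuclideanSpace ℂ (Fin d) := WithLp.toLp 2 φ
  have hin : (∑ i, (starRingEnd ℂ) (ψ i) * φ i) = inner ℂ ψ' φ' := by
    rw [PiLp.inner_apply]; simp [ψ', φ', mul_comm]
  have h := norm_inner_le_norm (𝕜 := ℂ) ψ' φ'
  have hψ : ‖ψ'‖^2 = ∑ i, Complex.normSq (ψ i) := by
    rw [EuclideanSpace.norm_eq, Real.sq_sqrt (by positivity)]
    simp [ψ', Complex.sq_norm]
  have hφ : ‖φ'‖^2 = ∑ i, Complex.normSq (φ i) := by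
    rw [EuclideanSpace.norm_eq, Real.sq_sqrt (by positivity)]
    simp [φ', Complex.sq_norm]
  calc Complex.normSq (∑ i, (starRingEnd ℂ) (ψ i) * φ i)
      = ‖inner ψ' φ' (𝕜 := ℂ)‖^2 := by
        rw [hin, Complex.sq_norm]
    _ ≤ (‖ψ'‖ * ‖φ'‖)^2 := by
        apply sq_le_sq' _ h
        nlinarith [norm_nonneg (inner ψ' φ' (𝕜 := ℂ)), mul_nonneg (norm_nonneg ψ') (norm_nonneg φ')]
    _ = (∑ i, Complex.normSq (ψ i)) * (∑ j, Complex.normSq (φ j)) := by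
        rw [mul_pow, hψ, hφ]

/-- Local-positivity (block-positivity) of a bipartite operator. -/
noncomputable def LocalPositive {d : ℕ} (M : Matrix (Fin d × Fin d) (Fin d × Fin d) ℂ) : Prop :=
  ∀ ψ φ : Fin d → ℂ,
    0 ≤ star (fun p : Fin d × Fin d => ψ p.1 * φ p.2) ⬝ᵥ
          M *ᵥ (fun p : Fin d × Fin d => ψ p.1 * φ p.2)

theorem stmt8 (d : ℕ) (hd : 2 ≤ d) (η : ℝ) :
    LocalPositive (werner d η) ↔ -1 / ((d : ℝ) - 1) ≤ η ∧ η ≤ 1 := by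
  have hd1 : (1:ℝ) < (d:ℝ) := by exact_mod_cast lt_of_lt_of_le one_lt_two hd
  have hd0 : (0:ℝ) < (d:ℝ) := by linarith
  have hdd : (0:ℝ) < (d:ℝ)^2 := by positivity
  constructor
  · intro h
    set i0 : Fin d := ⟨0, by omega⟩ with hi0
    set i1 : Fin d := ⟨1, by omega⟩ with hi1
    have hne : i1 ≠ i0 := by simp [hi0, hi1, Fin.ext_iff]
    set e0 : Fin d → ℂ := Pi.single i0 1 with he0
    set e1 : Fin d → ℂ := Pi.single i1 1 with he1
    have hs0 : ∑ i, Complex.normSq (e0 i) = 1 := by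
      simp [he0, Pi.single_apply, apply_ite Complex.normSq]
    have hs1 : ∑ i, Complex.normSq (e1 i) = 1 := by
      simp [he1, Pi.single_apply, apply_ite Complex.normSq]
    have hc00 : (∑ i, (starRingEnd ℂ) (e0 i) * e0 i) = 1 := by
      simp [he0, Pi.single_apply, apply_ite (starRingEnd ℂ), ite_and]
    have hc01 : (∑ i, (starRingEnd ℂ) (e0 i) * e1 i) = 0 := by
      rw [Finset.sum_eq_zero]
      intro i _
      rcases eq_or_ne i i0 with rfl | hi
      · simp [he1, Pi.single_apply, hne]
      · simp [he0, Pi.single_apply, hi]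
    have h1 := h e0 e0
    rw [form_eq, Complex.zero_le_real, hs0, hc00] at h1
    have h2 := h e0 e1
    rw [form_eq, Complex.zero_le_real, hs0, hs1, hc01] at h2
    simp only [Complex.normSq_one, Complex.normSq_zero, mul_one, mul_zero, add_zero] at h1 h2
    have h1' : 0 ≤ 1 - η + η * (d:ℝ) := by
      have e : ((1 - η) / (d:ℝ)^2 * 1 + η / (d:ℝ) * 1) * (d:ℝ)^2 = 1 - η + η * (d:ℝ) := by
        field_simp
      nlinarith [mul_nonneg h1 hdd.le]
    have h2' : 0 ≤ 1 - η := by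
      have e : ((1 - η) / (d:ℝ)^2) * (d:ℝ)^2 = 1 - η := by field_simp
      nlinarith [mul_nonneg h2 hdd.le]
    constructor
    · rw [div_le_iff₀ (by linarith : (0:ℝ) < (d:ℝ) - 1)]
      nlinarith
    · linarith
  · rintro ⟨hη1, hη2⟩ ψ φ
    rw [form_eq, Complex.zero_le_real]
    set A := ∑ i, Complex.normSq (ψ i) with hA
    set B := ∑ j, Complex.normSq (φ j) with hB
    set T := Complex.normSq (∑ i, (starRingEnd ℂ) (ψ i) * φ i) with hT
    have hA0 : 0 ≤ A := Finset.sum_nonneg fun i _ => Complex.normSq_nonneg _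
    have hB0 : 0 ≤ B := Finset.sum_nonneg fun i _ => Complex.normSq_nonneg _
    have hT0 : 0 ≤ T := Complex.normSq_nonneg _
    have hcs : T ≤ A * B := cs d ψ φ
    have hη1' : -1 ≤ η * ((d:ℝ) - 1) := by
      rw [div_le_iff₀ (by linarith : (0:ℝ) < (d:ℝ) - 1)] at hη1; linarith
    rcases le_or_gt 0 η with hs | hs
    · have t1 : 0 ≤ (1 - η) / (d:ℝ)^2 * (A * B) := by
        apply mul_nonneg (div_nonneg (by linarith) hdd.le) (mul_nonneg hA0 hB0)
      have t2 : 0 ≤ η / (d:ℝ) * T := by positivity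
      linarith
    · have key : (1 - η) / (d:ℝ)^2 * (A * B) + η / (d:ℝ) * T
          ≥ (1 - η) / (d:ℝ)^2 * (A * B) + η / (d:ℝ) * (A * B) := by
        have : η / (d:ℝ) * (A*B) ≤ η / (d:ℝ) * T := by
          apply mul_le_mul_of_nonpos_left hcs
          exact le_of_lt (div_neg_of_neg_of_pos hs hd0)
        linarith
      have key2 : 0 ≤ (1 - η) / (d:ℝ)^2 * (A * B) + η / (d:ℝ) * (A * B) := by
        have hq : (1 - η) / (d:ℝ)^2 * (A * B) + η / (d:ℝ) * (A * B)
            = ((1 + η * ((d:ℝ)-1)) / (d:ℝ)^2) * (A*B) := by field_simp; ring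
        rw [hq]
        apply mul_nonneg (div_nonneg (by linarith) hdd.le) (mul_nonneg hA0 hB0)
      linarith
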